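/- Let M : ℝ₊^p → ℝ₊^p be concave, positively homogeneous, and finite and continuous on a compact set K contained in the unit simplex S = {z ∈ ℝ₊^p : |z|₁ = 1}, where M(z) = lim_{r→∞} ξ(r·zV)/r for a superadditive ξ. Then the convergence ξ(r·zV)/r → M(z) is uniform on K: sup_{z∈K} |M(z) − ξ(r·zV)/r| → 0 as r → ∞. -/

import Mathlib

open Filter Topology

section
variable {p q : ℕ} (ξ : (Fin q → ℝ) → (Fin p → ℝ))
variable (hnn : ∀ x : Fin q → ℝ, 0 ≤ x → 0 ≤ ξ x)
variable (hsuper : ∀ x y : Fin q → ℝ, 0 ≤ x → 0 ≤ y → ξ x + ξ y ≤ ξ (x + y))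
include hnn hsuper

theorem xi_mono (a b : Fin q → ℝ) (ha : 0 ≤ a) (hab : a ≤ b) : ξ a ≤ ξ b := by
  have h1 : (0:Fin q → ℝ) ≤ b - a := by simpa using sub_nonneg.2 hab
  have h := hsuper a (b - a) ha h1
  simp only [add_sub_cancel] at h
  calc ξ a ≤ ξ a + ξ (b - a) := le_add_of_nonneg_right (hnn _ h1)
    _ ≤ ξ b := h

theorem xi_nsmul (x : Fin q → ℝ) (hx : 0 ≤ x) (n : ℕ) :
    (n : ℝ) • ξ x ≤ ξ ((n : ℝ) • x) := by
  induction n with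
  | zero => simpa using hnn 0 le_rfl
  | succ n ih =>
    have hnx : (0:Fin q → ℝ) ≤ (n:ℝ) • x := smul_nonneg (by positivity) hx
    have h1 : ξ ((n:ℝ) • x) + ξ x ≤ ξ ((n:ℝ) • x + x) := hsuper _ _ hnx hx
    push_cast
    rw [show ((n:ℝ)+1) • x = (n:ℝ) • x + x by rw [add_smul, one_smul],
      add_smul, one_smul]
    exact le_trans (add_le_add ih le_rfl) h1

-- Claim C: for 0 ≤ x, 1 ≤ s ≤ r: (1 - s/r) * (ξ(s•x) i / s) ≤ ξ(r•x) i / r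
theorem xi_ratio (x : Fin q → ℝ) (hx : 0 ≤ x) (s r : ℝ) (hs : 1 ≤ s) (hsr : s ≤ r)
    (i : Fin p) : (1 - s/r) * (ξ (s • x) i / s) ≤ ξ (r • x) i / r := by
  have hs0 : 0 < s := lt_of_lt_of_le one_pos hs
  have hr0 : 0 < r := lt_of_lt_of_le hs0 hsr
  set n : ℕ := ⌊r / s⌋₊ with hn
  have hns : (n : ℝ) * s ≤ r := by
    have : (n : ℝ) ≤ r / s := Nat.floor_le (by positivity)
    calc (n:ℝ) * s ≤ (r/s) * s := by nlinarith
      _ = r := by field_simp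
  have hn1 : r / s - 1 ≤ (n : ℝ) := by
    have := Nat.lt_floor_add_one (r / s)
    linarith
  have hsx : (0:Fin q → ℝ) ≤ s • x := smul_nonneg hs0.le hx
  have hnsx : (0:Fin q → ℝ) ≤ ((n:ℝ) * s) • x := smul_nonneg (by positivity) hx
  have hmono : ξ (((n:ℝ) * s) • x) ≤ ξ (r • x) := by
    apply xi_mono ξ hnn hsuper _ _ hnsx
    intro j
    have : ((n:ℝ) * s) * x j ≤ r * x j := mul_le_mul_of_nonneg_right hns (hx j)
    simpa using this
  have hpow : (n:ℝ) • ξ (s • x) ≤ ξ (((n:ℝ) * s) • x) := by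
    have := xi_nsmul ξ hnn hsuper (s • x) hsx n
    rwa [smul_smul] at this
  have hξs : 0 ≤ ξ (s • x) i := hnn _ hsx i
  have key : (n:ℝ) * ξ (s • x) i ≤ ξ (r • x) i := by
    have := le_trans (hpow i) (hmono i)
    simpa using this
  have hrs : (r/s)*s = r := div_mul_cancel₀ r hs0.ne'
  have hns2 : r - s ≤ (n:ℝ) * s := by nlinarith [mul_le_mul_of_nonneg_right hn1 hs0.le]
  have key3 : (r - s) * ξ (s • x) i ≤ ξ (r • x) i * s := by nlinarith
  have e : (1 - s/r) * (ξ (s • x) i / s) = ((r-s) * ξ (s • x) i)/(r*s) := by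
    rw [eq_div_iff (by positivity : (r*s) ≠ (0:ℝ))]
    field_simp
  rw [e, div_le_div_iff₀ (by positivity) hr0]
  nlinarith

end


set_option maxHeartbeats 1000000 in
/-- If `M(z) = sup_{r ≥ 1} ξ(r·zV)/r` is finite and continuous on a compact set `K`
contained in the unit simplex, then the convergence `ξ(r·zV)/r → M(z)` as `r → ∞`
is uniform on `K`. -/
theorem M_uniform_convergence {p q : ℕ}
    (ξ : (Fin q → ℝ) → (Fin p → ℝ)) (V : Matrix (Fin p) (Fin q) ℝ)
    (hV : ∀ i j, 0 ≤ V i j)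
    (hnn : ∀ x : Fin q → ℝ, 0 ≤ x → 0 ≤ ξ x)
    (hsuper : ∀ x y : Fin q → ℝ, 0 ≤ x → 0 ≤ y → ξ x + ξ y ≤ ξ (x + y))
    (h0 : ξ 0 = 0)
    (K : Set (Fin p → ℝ)) (hK : IsCompact K)
    (hKS : K ⊆ {z : Fin p → ℝ | 0 ≤ z ∧ ∑ i, z i = 1})
    (M : (Fin p → ℝ) → (Fin p → ℝ))
    (hMcont : ContinuousOn M K)
    (hM : ∀ z ∈ K, ∀ i, IsLUB
      {y : ℝ | ∃ r : ℝ, 1 ≤ r ∧ y = ξ (r • Matrix.vecMul z V) i / r} (M z i)) :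
    TendstoUniformlyOn
      (fun (r : ℝ) (z : Fin p → ℝ) => r⁻¹ • ξ (r • Matrix.vecMul z V))
      M atTop K := by
  classical
  -- vecMul formula and nonnegativity
  have vm : ∀ (z : Fin p → ℝ) (j : Fin q),
      Matrix.vecMul z V j = ∑ i, z i * V i j := by
    intro z j; simp [Matrix.vecMul, dotProduct]
  have hxnn : ∀ z ∈ K, (0 : Fin q → ℝ) ≤ Matrix.vecMul z V := by
    intro z hz j
    rw [vm]
    exact Finset.sum_nonneg fun i _ => mul_nonneg ((hKS hz).1 i) (hV i j)
  have hcomp : ∀ z ∈ K, ∀ w ∈ K, ∀ c : ℝ, 0 ≤ c → (∀ i, c * z i ≤ w i) →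
      ∀ j, c * Matrix.vecMul z V j ≤ Matrix.vecMul w V j := by
    intro z hz w hw c hc hcz j
    rw [vm, vm, Finset.mul_sum]
    apply Finset.sum_le_sum
    intro i _
    rw [← mul_assoc]
    exact mul_le_mul_of_nonneg_right (hcz i) (hV i j)
  -- upper bound and nonnegativity of the approximants
  have fub : ∀ r : ℝ, 1 ≤ r → ∀ z ∈ K, ∀ i,
      ξ (r • Matrix.vecMul z V) i / r ≤ M z i := by
    intro r hr z hz i
    exact (hM z hz i).1 ⟨r, hr, rfl⟩
  have fnn : ∀ r : ℝ, 0 < r → ∀ z ∈ K, ∀ i,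
      0 ≤ ξ (r • Matrix.vecMul z V) i / r := by
    intro r hr z hz i
    exact div_nonneg (hnn _ (smul_nonneg hr.le (hxnn z hz)) i) hr.le
  have Mnn : ∀ z ∈ K, ∀ i, 0 ≤ M z i := by
    intro z hz i
    exact le_trans (by simpa using fnn 1 one_pos z hz i) (fub 1 le_rfl z hz i)
  -- uniform bound B for M on K
  obtain ⟨C, hC⟩ := hK.exists_bound_of_continuousOn hMcont
  set B : ℝ := max C 0 with hBdef
  have hB0 : 0 ≤ B := le_max_right _ _
  have hB : ∀ z ∈ K, ∀ i, M z i ≤ B := by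
    intro z hz i
    calc M z i ≤ |M z i| := le_abs_self _
      _ ≤ ‖M z‖ := norm_le_pi_norm (M z) i
      _ ≤ C := hC z hz
      _ ≤ B := le_max_left _ _
  -- key local lemma
  have key : ∀ ε : ℝ, 0 < ε → ∀ z ∈ K, ∃ U ∈ 𝓝 z, ∃ R : ℝ, 1 ≤ R ∧
      ∀ r : ℝ, R ≤ r → ∀ w ∈ U, w ∈ K → ∀ i,
        M w i - ε ≤ ξ (r • Matrix.vecMul w V) i / r := by
    intro ε hε z hz
    have hzx : (0 : Fin q → ℝ) ≤ Matrix.vecMul z V := hxnn z hz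
    -- Step 1: a good single time s for z
    have hstep1 : ∀ i : Fin p, ∃ t : ℝ, 1 ≤ t ∧
        M z i - ε/8 < ξ (t • Matrix.vecMul z V) i / t := by
      intro i
      have hlt : M z i - ε/8 < M z i := by linarith
      obtain ⟨y, ⟨t, ht1, rfl⟩, hy⟩ := (lt_isLUB_iff (hM z hz i)).1 hlt
      exact ⟨t, ht1, hy⟩
    choose ri hri1 hri2 using hstep1
    set s : ℝ := 1 + ∑ i, max (ri i) (8 * ri i * B / ε) with hsdef
    have hmaxnn : ∀ i : Fin p, 0 ≤ max (ri i) (8 * ri i * B / ε) := by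
      intro i
      exact le_trans (le_trans zero_le_one (hri1 i)) (le_max_left _ _)
    have hs1 : 1 ≤ s := by
      have : 0 ≤ ∑ i, max (ri i) (8 * ri i * B / ε) :=
        Finset.sum_nonneg fun i _ => hmaxnn i
      simp only [hsdef]; linarith
    have hs0 : 0 < s := lt_of_lt_of_le one_pos hs1
    have hsge : ∀ i : Fin p, ri i ≤ s ∧ 8 * ri i * B / ε ≤ s := by
      intro i
      have h1 : max (ri i) (8 * ri i * B / ε) ≤ ∑ j, max (ri j) (8 * ri j * B / ε) :=
        Finset.single_le_sum (fun j _ => hmaxnn j) (Finset.mem_univ i)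
      constructor
      · calc ri i ≤ max (ri i) _ := le_max_left _ _
          _ ≤ _ := h1
          _ ≤ s := by simp only [hsdef]; linarith
      · calc 8 * ri i * B / ε ≤ max (ri i) (8 * ri i * B / ε) := le_max_right _ _
          _ ≤ _ := h1
          _ ≤ s := by simp only [hsdef]; linarith
    have hfs : ∀ i, M z i - ε/4 ≤ ξ (s • Matrix.vecMul z V) i / s := by
      intro i
      have hrat := xi_ratio ξ hnn hsuper _ hzx (ri i) s (hri1 i) (hsge i).1 i
      set a : ℝ := ξ (ri i • Matrix.vecMul z V) i / ri i with hadef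
      have hri0 : 0 < ri i := lt_of_lt_of_le one_pos (hri1 i)
      have ha0 : 0 ≤ a := fnn (ri i) hri0 z hz i
      have haM : a ≤ M z i := fub (ri i) (hri1 i) z hz i
      have haB : a ≤ B := le_trans haM (hB z hz i)
      have hds : 0 ≤ ri i / s := by positivity
      have h1 : (ri i / s) * a ≤ (ri i / s) * B := mul_le_mul_of_nonneg_left haB hds
      have h2 : (ri i / s) * B ≤ ε / 8 := by
        rw [div_mul_eq_mul_div, div_le_div_iff₀ hs0 (by norm_num : (0:ℝ) < 8)]
        have := (hsge i).2
        rw [div_le_iff₀ hε] at this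
        linarith
      have h3 : M z i - ε/8 < a := hri2 i
      nlinarith
    -- Step 2: minimum positive coordinate of z
    obtain ⟨i0, hi0⟩ : ∃ i, 0 < z i := by
      by_contra h
      push_neg at h
      have h1 : ∑ i, z i ≤ 0 := Finset.sum_nonpos fun i _ => h i
      rw [(hKS hz).2] at h1
      linarith
    set F : Finset (Fin p) := Finset.univ.filter (fun i => 0 < z i) with hF
    have hFne : F.Nonempty := ⟨i0, by simp [hF, hi0]⟩
    set m : ℝ := F.inf' hFne z with hmdef
    have hm0 : 0 < m := by
      rw [hmdef, Finset.lt_inf'_iff]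
      intro i hi
      exact (Finset.mem_filter.1 hi).2
    have hmz : ∀ i, 0 < z i → m ≤ z i := by
      intro i hi
      exact Finset.inf'_le _ (by simp [hF, hi])
    clear_value s m
    -- Step 3: δ
    set δ : ℝ := min (m/2) (ε * m / (4*(B+1))) with hδdef
    have hδ0 : 0 < δ := lt_min (by linarith) (by positivity)
    have hδm : δ ≤ m/2 := min_le_left _ _
    have hδB : δ / m * B ≤ ε / 4 := by
      have h1 : δ ≤ ε * m / (4*(B+1)) := min_le_right _ _
      rw [le_div_iff₀ (by positivity : (0:ℝ) < 4*(B+1))] at h1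
      rw [div_mul_eq_mul_div, div_le_div_iff₀ hm0 (by norm_num : (0:ℝ) < 4)]
      nlinarith
    have hδm1 : δ/m ≤ 1/2 := by rw [div_le_iff₀ hm0]; linarith
    have hδmnn : 0 ≤ δ/m := by positivity
    clear_value δ
    -- Step 4: continuity neighborhood
    have hcw : {w | dist (M w) (M z) < ε/4} ∈ 𝓝[K] z := by
      have h1 := hMcont z hz (Metric.ball_mem_nhds (M z) (by positivity : (0:ℝ) < ε/4))
      simpa [Metric.mem_ball, Set.preimage] using h1
    obtain ⟨U', hU'nhds, hU'⟩ := mem_nhdsWithin_iff_exists_mem_nhds_inter.1 hcw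
    refine ⟨Metric.ball z δ ∩ U',
      Filter.inter_mem (Metric.ball_mem_nhds z hδ0) hU'nhds,
      max (2*s) (8*s*(B+1)/ε), le_trans (by linarith) (le_max_left _ _), ?_⟩
    intro r hr w hwU hw i
    obtain ⟨hwball, hwU'⟩ := hwU
    have hr2s : 2*s ≤ r := le_trans (le_max_left _ _) hr
    have hrB : 8*s*(B+1)/ε ≤ r := le_trans (le_max_right _ _) hr
    have hr0 : 0 < r := by linarith
    set c : ℝ := 1 - δ/m with hcdef
    have hc2 : 1/2 ≤ c := by rw [hcdef]; linarith
    have hc1 : c ≤ 1 := by rw [hcdef]; linarith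
    have hc0 : 0 < c := lt_of_lt_of_le one_half_pos hc2
    clear_value c
    -- w dominates c • z
    have hwz : ∀ i', c * z i' ≤ w i' := by
      intro i'
      by_cases hzi : 0 < z i'
      · have hmz' := hmz i' hzi
        have hd : dist (w i') (z i') ≤ dist w z := dist_le_pi_dist w z i'
        have hdz : dist w z < δ := Metric.mem_ball.1 hwball
        have habs : |w i' - z i'| < δ := by
          rw [← Real.dist_eq]; exact lt_of_le_of_lt hd hdz
        have h1 : z i' - δ ≤ w i' := by
          have := (abs_lt.1 habs).1; linarith
        have h2 : δ ≤ (δ/m) * z i' := by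
          rw [div_mul_eq_mul_div, le_div_iff₀ hm0]; nlinarith
        rw [hcdef]; nlinarith
      · have hz0 : z i' = 0 := le_antisymm (not_lt.1 hzi) ((hKS hz).1 i')
        rw [hz0, mul_zero]; exact (hKS hw).1 i'
    have hrc : s ≤ r * c := by
      have h1 : r * (1/2) ≤ r * c := mul_le_mul_of_nonneg_left hc2 hr0.le
      linarith
    have hrc0 : 0 < r * c := mul_pos hr0 hc0
    have hcompw : ∀ j, (r*c) * Matrix.vecMul z V j ≤ r * Matrix.vecMul w V j := by
      intro j
      calc (r*c) * Matrix.vecMul z V j = r * (c * Matrix.vecMul z V j) := by ring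
        _ ≤ r * Matrix.vecMul w V j :=
          mul_le_mul_of_nonneg_left (hcomp z hz w hw c hc0.le hwz j) hr0.le
    have hmono : ξ ((r*c) • Matrix.vecMul z V) ≤ ξ (r • Matrix.vecMul w V) := by
      apply xi_mono ξ hnn hsuper
      · exact smul_nonneg hrc0.le hzx
      · intro j; simpa using hcompw j
    have hrat := xi_ratio ξ hnn hsuper _ hzx s (r*c) hs1 hrc i
    set a : ℝ := ξ (s • Matrix.vecMul z V) i / s with hadef2
    have ha0 : 0 ≤ a := fnn s hs0 z hz i
    have haB : a ≤ B := le_trans (fub s hs1 z hz i) (hB z hz i)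
    have hfsz : M z i - ε/4 ≤ a := hfs i
    set X : ℝ := ξ ((r*c) • Matrix.vecMul z V) i / (r*c) with hXdef
    have hfsz2 : 0 ≤ a := ha0
    clear_value a
    have hchain1 : c * X ≤ ξ (r • Matrix.vecMul w V) i / r := by
      have e : c * X = ξ ((r*c) • Matrix.vecMul z V) i / r := by
        rw [hXdef]; field_simp
      rw [e]
      exact (div_le_div_iff_of_pos_right hr0).2 (hmono i)
    have h4 : a - (s/(r*c)) * B ≤ X := by
      have h5 : (s/(r*c)) * a ≤ (s/(r*c)) * B :=
        mul_le_mul_of_nonneg_left haB (by positivity)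
      clear_value X
      linarith [hrat, h5]
    have h6 : (s/(r*c)) * B ≤ ε/4 := by
      have e1 : s/(r*c) ≤ 2*s/r := by
        rw [div_le_div_iff₀ hrc0 hr0]
        have h := mul_le_mul_of_nonneg_left (show (1:ℝ) ≤ 2*c by linarith)
          (show (0:ℝ) ≤ s*r by positivity)
        linarith [h]
      have e2 : 2*s/r * B ≤ ε/4 := by
        rw [div_le_iff₀ hε] at hrB
        rw [div_mul_eq_mul_div, div_le_div_iff₀ hr0 (by norm_num : (0:ℝ) < 4)]
        have h := mul_le_mul_of_nonneg_left hB0 (show (0:ℝ) ≤ 8*s by linarith)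
        nlinarith [h]
      calc (s/(r*c))*B ≤ (2*s/r)*B := mul_le_mul_of_nonneg_right e1 hB0
        _ ≤ ε/4 := e2
    have h7 : c * (a - ε/4) ≤ c * X :=
      mul_le_mul_of_nonneg_left (by linarith) hc0.le
    have h8 : a - ε/4 - (δ/m)*B ≤ c * (a - ε/4) := by
      have h9 : (δ/m) * (a - ε/4) ≤ (δ/m) * B :=
        mul_le_mul_of_nonneg_left (by linarith) hδmnn
      rw [hcdef]; nlinarith
    have hcont : M w i - ε/4 ≤ M z i := by
      have hd := hU' ⟨hwU', hw⟩
      have hd2 : dist (M w i) (M z i) ≤ dist (M w) (M z) := dist_le_pi_dist _ _ i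
      have : |M w i - M z i| < ε/4 := by
        rw [← Real.dist_eq]; exact lt_of_le_of_lt hd2 hd
      have := (abs_lt.1 this).2; linarith
    linarith
  -- conclusion via compactness
  rw [Metric.tendstoUniformlyOn_iff]
  intro ε hε
  have key2 := key (ε/2) (by linarith)
  choose! U hU R hR1 hR using key2
  obtain ⟨t, htK, htcov⟩ := hK.elim_nhds_subcover U (fun z hz => hU z hz)
  set R0 : ℝ := 1 + ∑ z ∈ t, max (R z) 0 with hR0
  have hsum0 : 0 ≤ ∑ y ∈ t, max (R y) 0 :=
    Finset.sum_nonneg fun y _ => le_max_right _ _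
  have hR0ge : ∀ z ∈ t, R z ≤ R0 := by
    intro z hzt
    have h1 : max (R z) 0 ≤ ∑ y ∈ t, max (R y) 0 :=
      Finset.single_le_sum (f := fun y => max (R y) 0) (fun y _ => le_max_right _ _) hzt
    calc R z ≤ max (R z) 0 := le_max_left _ _
      _ ≤ ∑ y ∈ t, max (R y) 0 := h1
      _ ≤ R0 := by rw [hR0]; linarith
  have hR01 : 1 ≤ R0 := by rw [hR0]; linarith
  filter_upwards [eventually_ge_atTop R0] with r hr
  intro w hw
  have hr1 : 1 ≤ r := le_trans hR01 hr
  have hr0 : 0 < r := by linarith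
  rw [dist_pi_lt_iff hε]
  intro i
  obtain ⟨z, hzt, hwz⟩ : ∃ z ∈ t, w ∈ U z := by
    have := htcov hw
    simpa using this
  have hlow := hR z (htK z hzt) r (le_trans (hR0ge z hzt) hr) w hwz hw i
  have hup := fub r hr1 w hw i
  have he : (r⁻¹ • ξ (r • Matrix.vecMul w V)) i = ξ (r • Matrix.vecMul w V) i / r := by
    simp [div_eq_inv_mul]
  rw [Real.dist_eq, he, abs_lt]
  constructor <;> linarith
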